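/- Let H be Hermitian on ℂ^n and P a one-dimensional orthogonal projection P = |ψ₀⟩⟨ψ₀|. Then (P e^{-iHt/N})^N ψ₀ converges as N → ∞ to e^{-it⟨ψ₀,Hψ₀⟩} ψ₀; i.e. the Zeno limit freezes the state up to a phase given by the expectation of H. -/

import Mathlib

open Matrix NormedSpace Filter Asymptotics

attribute [local instance] Matrix.linftyOpNormedAddCommGroup Matrix.linftyOpNormedRing
  Matrix.linftyOpNormedAlgebra

private lemma proj_mulVec {n : ℕ} (ψ v : Fin n → ℂ) :
    vecMulVec ψ (star ψ) *ᵥ v = (star ψ ⬝ᵥ v) • ψ := by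
  ext i
  simp [mulVec, vecMulVec, dotProduct, Finset.mul_sum, mul_comm, mul_assoc, mul_left_comm]

private lemma proj_pow_mulVec {n : ℕ} (ψ : Fin n → ℂ) (hψ : star ψ ⬝ᵥ ψ = 1)
    (A : Matrix (Fin n) (Fin n) ℂ) (N : ℕ) :
    ((vecMulVec ψ (star ψ) * A) ^ N) *ᵥ ψ = (star ψ ⬝ᵥ (A *ᵥ ψ)) ^ N • ψ := by
  induction N with
  | zero => simp [one_mulVec]
  | succ N ih =>
    rw [pow_succ', ← mulVec_mulVec, ih, mulVec_smul, ← mulVec_mulVec, proj_mulVec,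
      smul_smul, pow_succ', mul_comm]

private lemma tendsto_inv_nat_complex :
    Tendsto (fun N : ℕ => ((N : ℂ))⁻¹) atTop (nhds 0) := by
  have h : Tendsto (fun N : ℕ => ((N : ℝ))⁻¹) atTop (nhds 0) := tendsto_inv_atTop_nhds_zero_nat
  have h2 : Tendsto (fun x : ℝ => (x : ℂ)) (nhds 0) (nhds 0) := by
    simpa using Complex.continuous_ofReal.tendsto 0
  have := h2.comp h
  refine this.congr fun N => ?_
  simp [Function.comp_def]

private lemma tendsto_pow_exp_of_tendsto (f : ℕ → ℂ) (a : ℂ)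
    (h : Tendsto (fun N : ℕ => (N : ℂ) * (f N - 1)) atTop (nhds a)) :
    Tendsto (fun N => f N ^ N) atTop (nhds (Complex.exp a)) := by
  -- f N - 1 → 0
  have hu : Tendsto (fun N : ℕ => f N - 1) atTop (nhds 0) := by
    have := h.mul tendsto_inv_nat_complex
    rw [mul_zero] at this
    apply this.congr'
    filter_upwards [eventually_ge_atTop 1] with N hN
    have : (N : ℂ) ≠ 0 := Nat.cast_ne_zero.mpr (by omega)
    field_simp
  -- eventually f N ≠ 0
  have hnorm : Tendsto (fun N : ℕ => ‖f N - 1‖) atTop (nhds 0) := by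
    simpa using hu.norm
  have hfne : ∀ᶠ N in atTop, f N ≠ 0 := by
    filter_upwards [hnorm.eventually_lt_const one_pos] with N hN
    intro h0
    simp [h0] at hN
  -- log(1+w) - w = o(w) near 0
  have hlog1 : HasDerivAt (fun w : ℂ => Complex.log (1 + w)) 1 0 := by
    have h1 : HasDerivAt (fun w : ℂ => (1 : ℂ) + w) 1 0 := (hasDerivAt_id 0).const_add 1
    have := (Complex.hasDerivAt_log (by simp [Complex.slitPlane] : (1 : ℂ) + 0 ∈ Complex.slitPlane)).comp 0 h1
    rw [add_zero, inv_one, one_mul] at this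
    exact this
  have hlo : (fun w : ℂ => Complex.log (1 + w) - w) =o[nhds 0] (fun w : ℂ => w) := by
    have := hasDerivAt_iff_isLittleO.mp hlog1
    simpa using this
  -- compose and multiply by N
  have hlo2 : (fun N : ℕ => Complex.log (1 + (f N - 1)) - (f N - 1))
      =o[atTop] (fun N : ℕ => f N - 1) := hlo.comp_tendsto hu
  have hlo3 : (fun N : ℕ => (N : ℂ) * (Complex.log (1 + (f N - 1)) - (f N - 1)))
      =o[atTop] (fun N : ℕ => (N : ℂ) * (f N - 1)) :=
    (isBigO_refl (fun N : ℕ => (N : ℂ)) atTop).mul_isLittleO hlo2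
  have hrem : Tendsto (fun N : ℕ => (N : ℂ) * (Complex.log (1 + (f N - 1)) - (f N - 1)))
      atTop (nhds 0) := by
    exact (isLittleO_one_iff ℂ).mp (hlo3.trans_isBigO (h.isBigO_one ℂ))
  -- N * log (f N) → a
  have hlim : Tendsto (fun N : ℕ => (N : ℂ) * Complex.log (f N)) atTop (nhds a) := by
    have := hrem.add h
    rw [zero_add] at this
    apply this.congr
    intro N
    have : (1 : ℂ) + (f N - 1) = f N := by ring
    rw [this]; ring
  have := (Complex.continuous_exp.tendsto a).comp hlim
  apply this.congr'
  filter_upwards [hfne] with N hN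
  simp only [Function.comp]
  rw [Complex.exp_nat_mul, Complex.exp_log hN]

theorem zeno_rank_one_freezing {n : ℕ} (H : Matrix (Fin n) (Fin n) ℂ)
    (hH : H.IsHermitian) (ψ : Fin n → ℂ) (hψ : star ψ ⬝ᵥ ψ = 1) (t : ℝ) :
    Tendsto
      (fun N : ℕ =>
        ((vecMulVec ψ (star ψ) * exp ((-(Complex.I * t) / (N : ℂ)) • H)) ^ N) *ᵥ ψ)
      atTop
      (nhds (Complex.exp (-(Complex.I * t) * (star ψ ⬝ᵥ (H *ᵥ ψ))) • ψ)) := by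
  set z : ℂ := -(Complex.I * t) with hz
  set c : ℂ := star ψ ⬝ᵥ (H *ᵥ ψ) with hc
  -- the continuous linear functional M ↦ ψ* M ψ
  let L : Matrix (Fin n) (Fin n) ℂ →ₗ[ℂ] ℂ :=
    { toFun := fun M => star ψ ⬝ᵥ (M *ᵥ ψ)
      map_add' := fun M M' => by simp [add_mulVec, dotProduct_add]
      map_smul' := fun r M => by simp [smul_mulVec, dotProduct_smul] }
  let Lc := LinearMap.toContinuousLinearMap L
  -- derivative of g(s) = ψ* exp(sH) ψ at 0 is c
  have hd : HasDerivAt (fun s : ℂ => exp (s • H)) H 0 := by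
    have := hasDerivAt_exp_smul_const' (𝕂 := ℂ) H 0
    simp only [zero_smul, exp_zero, mul_one] at this
    exact this
  have hg : HasDerivAt (fun s : ℂ => star ψ ⬝ᵥ (exp (s • H) *ᵥ ψ)) c 0 := by
    have := Lc.hasFDerivAt.comp_hasDerivAt 0 hd
    exact this
  have hg0 : star ψ ⬝ᵥ (exp ((0 : ℂ) • H) *ᵥ ψ) = 1 := by
    simp [exp_zero, one_mulVec, hψ]
  set f : ℕ → ℂ := fun N => star ψ ⬝ᵥ (exp ((z / (N : ℂ)) • H) *ᵥ ψ) with hf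
  have key : Tendsto (fun N : ℕ => (N : ℂ) * (f N - 1)) atTop (nhds (z * c)) := by
    by_cases hz0 : z = 0
    · have : ∀ N : ℕ, (N : ℂ) * (f N - 1) = 0 := by
        intro N
        simp [hf, hz0, zero_div, hg0, hψ]
      simpa [this, hz0] using tendsto_const_nhds.congr fun N => (this N).symm
    · have hsl := hasDerivAt_iff_tendsto_slope.mp hg
      have hseq : Tendsto (fun N : ℕ => z / (N : ℂ)) atTop (nhds 0 ⊓ Filter.principal {(0 : ℂ)}ᶜ) := by
        rw [tendsto_inf]
        constructor
        · have := tendsto_inv_nat_complex.const_mul z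
          simpa [div_eq_mul_inv] using this
        · rw [tendsto_principal]
          filter_upwards [eventually_ge_atTop 1] with N hN
          have : (N : ℂ) ≠ 0 := Nat.cast_ne_zero.mpr (by omega)
          simp [div_eq_iff this, hz0]
      have := hsl.comp hseq
      have h2 : Tendsto (fun N : ℕ => slope (fun s : ℂ => star ψ ⬝ᵥ (exp (s • H) *ᵥ ψ)) 0 (z / N))
          atTop (nhds c) := this
      have h3 := h2.const_mul z
      apply h3.congr'
      filter_upwards [eventually_ge_atTop 1] with N hN
      have hNne : (N : ℂ) ≠ 0 := Nat.cast_ne_zero.mpr (by omega)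
      rw [slope_def_field]
      simp only [hg0, sub_zero]
      rw [hf]
      field_simp
  have hpow := tendsto_pow_exp_of_tendsto f (z * c) key
  have := hpow.smul_const ψ
  apply this.congr
  intro N
  rw [proj_pow_mulVec ψ hψ]
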